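/- Let (ρ₁,ρ₂) be density matrices on ℂ^n and (ρ₁′,ρ₂′) be density matrices on ℂ^m. The following are equivalent: (i) T(ρ₁,ρ₂) ⊇ T(ρ₁′,ρ₂′); (ii) ‖t₁ρ₁ + t₂ρ₂‖₁ ≥ ‖t₁ρ₁′ + t₂ρ₂′‖₁ for all t₁, t₂ ∈ ℝ; (iii) ‖ρ₁ − tρ₂‖₁ ≥ ‖ρ₁′ − tρ₂′‖₁ for all t ≥ 0. -/

import Mathlib

open scoped ComplexOrder

noncomputable def Matrix.PosSemidef.sqrt {n : Type*} [Fintype n] [DecidableEq n] {𝕜 : Type*}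
    [RCLike 𝕜] {A : Matrix n n 𝕜} (hA : A.PosSemidef) : Matrix n n 𝕜 :=
  hA.1.eigenvectorUnitary.1 * Matrix.diagonal ((↑) ∘ (√·) ∘ hA.1.eigenvalues) *
    (star hA.1.eigenvectorUnitary : Matrix n n 𝕜)

section sqrtPort
open scoped MatrixOrder
variable {n : Type*} [Fintype n] [DecidableEq n] {𝕜 : Type*} [RCLike 𝕜] {A : Matrix n n 𝕜}

lemma Matrix.PosSemidef.sqrt_eq_cfc (hA : A.PosSemidef) : hA.sqrt = CFC.sqrt A := by
  rw [CFC.sqrt_eq_cfc, cfc_nnreal_eq_real _ A, hA.1.cfc_eq]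
  simp only [Matrix.IsHermitian.cfc, Unitary.conjStarAlgAut_apply, Matrix.PosSemidef.sqrt]
  congr 3
  funext i
  simp [hA.eigenvalues_nonneg i]

lemma Matrix.PosSemidef.posSemidef_sqrt (hA : A.PosSemidef) : hA.sqrt.PosSemidef := by
  rw [hA.sqrt_eq_cfc]; exact Matrix.nonneg_iff_posSemidef.mp (CFC.sqrt_nonneg A)

lemma Matrix.PosSemidef.sq_sqrt (hA : A.PosSemidef) : hA.sqrt ^ 2 = A := by
  rw [hA.sqrt_eq_cfc]; exact CFC.sq_sqrt A hA.nonneg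

lemma Matrix.PosSemidef.sqrt_mul_self (hA : A.PosSemidef) : hA.sqrt * hA.sqrt = A := by
  rw [hA.sqrt_eq_cfc]; exact CFC.sqrt_mul_sqrt_self A hA.nonneg

lemma Matrix.PosSemidef.eq_sqrt_of_sq_eq (hA : A.PosSemidef) {B : Matrix n n 𝕜}
    (hB : B.PosSemidef) (hAB : A ^ 2 = B) : A = hB.sqrt := by
  rw [hB.sqrt_eq_cfc]
  exact (CFC.sqrt_unique (by rw [← sq]; exact hAB) hA.nonneg).symm

end sqrtPort

/-- The trace norm of a matrix, `‖A‖₁ = Tr[√(AᴴA)]`. -/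
noncomputable def traceNorm {n : ℕ} (A : Matrix (Fin n) (Fin n) ℂ) : ℝ :=
  ((Matrix.posSemidef_conjTranspose_mul_self A).sqrt).trace.re

/-- The testing region `T(ρ₁,ρ₂) = { (Tr[Eρ₂], Tr[Eρ₁]) : 0 ≤ E ≤ 𝟙 }`. -/
def testRegion {n : ℕ} (ρ₁ ρ₂ : Matrix (Fin n) (Fin n) ℂ) : Set (ℝ × ℝ) :=
  { p | ∃ E : Matrix (Fin n) (Fin n) ℂ, E.PosSemidef ∧
    ((1 : Matrix (Fin n) (Fin n) ℂ) - E).PosSemidef ∧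
    p = ((E * ρ₂).trace.re, (E * ρ₁).trace.re) }

open Matrix

variable {k : ℕ}

lemma psd_smul {A : Matrix (Fin k) (Fin k) ℂ} (hA : A.PosSemidef) {c : ℝ} (hc : 0 ≤ c) :
    ((c:ℂ) • A).PosSemidef := by
  refine ⟨?_, fun x => ?_⟩
  · unfold Matrix.IsHermitian
    rw [conjTranspose_smul, hA.1.eq, Complex.star_def, Complex.conj_ofReal]
  · exact (hA.smul (show (0:ℂ) ≤ (c:ℂ) by exact_mod_cast hc)).2 x

lemma psd_diag {A : Matrix (Fin k) (Fin k) ℂ} (hA : A.PosSemidef) (i : Fin k) :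
    0 ≤ A i i := by
  exact hA.diag_nonneg

section generic
variable {V : Matrix (Fin k) (Fin k) ℂ}

lemma conj_mul_conj (hV' : star V * V = 1) (f g : Fin k → ℂ) :
    (V * diagonal f * star V) * (V * diagonal g * star V)
      = V * diagonal (fun i => f i * g i) * star V := by
  simp only [Matrix.mul_assoc]
  rw [← Matrix.mul_assoc (star V) V (diagonal g * star V), hV', Matrix.one_mul,
    ← Matrix.mul_assoc (diagonal f) (diagonal g) (star V), diagonal_mul_diagonal]

lemma trace_conj (hV' : star V * V = 1) (f : Fin k → ℂ) :
    (V * diagonal f * star V).trace = ∑ i, f i := by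
  rw [trace_mul_cycle, hV', Matrix.one_mul, trace_diagonal]

lemma conj_psd {d : Fin k → ℝ} (hd : ∀ i, 0 ≤ d i) :
    (V * diagonal (fun i => ((d i : ℝ) : ℂ)) * star V).PosSemidef := by
  rw [Matrix.star_eq_conjTranspose]
  refine (Matrix.PosSemidef.diagonal ?_).mul_mul_conjTranspose_same V
  intro i
  simpa using Complex.zero_le_real.mpr (hd i)

variable {A : Matrix (Fin k) (Fin k) ℂ} {lam : Fin k → ℝ}

lemma traceNorm_eq_sum_abs (hA : A.IsHermitian) (hV' : star V * V = 1)
    (hAeq : A = V * diagonal (fun i => ((lam i : ℝ) : ℂ)) * star V) : traceNorm A = ∑ i, |lam i| := by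
  have hB : (V * diagonal (fun i => ((|lam i| : ℝ) : ℂ)) * star V).PosSemidef :=
    conj_psd (fun i => abs_nonneg _)
  have hsq : (V * diagonal (fun i => ((|lam i| : ℝ) : ℂ)) * star V) ^ 2 = Aᴴ * A := by
    rw [hA.eq, pow_two, hAeq, conj_mul_conj hV', conj_mul_conj hV']
    have habs : ∀ (r : ℝ), ((|r| : ℝ) : ℂ) * ((|r| : ℝ) : ℂ) = ((r : ℝ) : ℂ) * ((r : ℝ) : ℂ) :=
      fun r => by exact_mod_cast congrArg Complex.ofReal (abs_mul_abs_self r)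
    simp only [habs]
  have heq := hB.eq_sqrt_of_sq_eq (Matrix.posSemidef_conjTranspose_mul_self A) hsq
  unfold traceNorm
  rw [← heq, trace_conj hV', Complex.re_sum]
  simp

lemma trace_eq_sum_eig (hV' : star V * V = 1)
    (hAeq : A = V * diagonal (fun i => ((lam i : ℝ) : ℂ)) * star V) : A.trace = ∑ i, (lam i : ℂ) := by
  rw [hAeq, trace_conj hV']

lemma test_trace_le (hV' : star V * V = 1)
    (hAeq : A = V * diagonal (fun i => ((lam i : ℝ) : ℂ)) * star V) {E : Matrix (Fin k) (Fin k) ℂ} (hE : E.PosSemidef)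
    (hE1 : ((1 : Matrix (Fin k) (Fin k) ℂ) - E).PosSemidef) :
    ((E * A).trace).re ≤ ∑ i, max (lam i) 0 := by
  have hF : (star V * E * V).PosSemidef := by
    have := hE.mul_mul_conjTranspose_same (star V)
    simpa [Matrix.star_eq_conjTranspose] using this
  have hF1 : ((1 : Matrix (Fin k) (Fin k) ℂ) - star V * E * V).PosSemidef := by
    have := hE1.mul_mul_conjTranspose_same (star V)
    have h2 : star V * (1 - E) * (star V)ᴴ = 1 - star V * E * V := by
      rw [← Matrix.star_eq_conjTranspose, star_star, Matrix.mul_sub, Matrix.mul_one,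
        Matrix.sub_mul, hV']
    rwa [h2] at this
  have hdiag0 : ∀ i, 0 ≤ ((star V * E * V) i i).re := fun i =>
    (Complex.le_def.mp (psd_diag hF i)).1
  have hdiag1 : ∀ i, ((star V * E * V) i i).re ≤ 1 := by
    intro i
    have := (Complex.le_def.mp (psd_diag hF1 i)).1
    simp only [Matrix.sub_apply, Matrix.one_apply_eq, Complex.sub_re, Complex.one_re,
      Complex.zero_re] at this
    linarith
  have htr : (E * A).trace
      = ((star V * E * V) * diagonal (fun i => ((lam i : ℝ) : ℂ))).trace := by
    rw [hAeq]
    simp only [← Matrix.mul_assoc]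
    rw [trace_mul_cycle (E * V) (diagonal (fun i => ((lam i : ℝ) : ℂ))) (star V)]
    simp only [← Matrix.mul_assoc]
  rw [htr]
  have htr2 : ((star V * E * V) * diagonal (fun i => ((lam i : ℝ) : ℂ))).trace
      = ∑ i, (star V * E * V) i i * (lam i : ℂ) := by
    simp [Matrix.trace, Matrix.diag, mul_diagonal]
  rw [htr2, Complex.re_sum]
  refine Finset.sum_le_sum fun i _ => ?_
  have hre : ((star V * E * V) i i * (lam i : ℂ)).re
      = ((star V * E * V) i i).re * lam i := by
    simp [Complex.mul_re]
  rw [hre]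
  rcases le_or_gt 0 (lam i) with h | h
  · calc ((star V * E * V) i i).re * lam i ≤ 1 * lam i :=
        mul_le_mul_of_nonneg_right (hdiag1 i) h
    _ = lam i := one_mul _
    _ ≤ max (lam i) 0 := le_max_left _ _
  · calc ((star V * E * V) i i).re * lam i ≤ 0 :=
        mul_nonpos_of_nonneg_of_nonpos (hdiag0 i) h.le
    _ ≤ max (lam i) 0 := le_max_right _ _

lemma exists_max_test (hV : V * star V = 1) (hV' : star V * V = 1)
    (hAeq : A = V * diagonal (fun i => ((lam i : ℝ) : ℂ)) * star V) : ∃ E : Matrix (Fin k) (Fin k) ℂ, E.PosSemidef ∧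
    ((1 : Matrix (Fin k) (Fin k) ℂ) - E).PosSemidef ∧
    ((E * A).trace).re = ∑ i, max (lam i) 0 := by
  set χ : Fin k → ℝ := fun i => if 0 ≤ lam i then 1 else 0 with hχ
  refine ⟨V * diagonal (fun i => ((χ i : ℝ) : ℂ)) * star V, conj_psd fun i => by
    by_cases h : 0 ≤ lam i <;> simp [hχ, h], ?_, ?_⟩
  · have hone : (1 : Matrix (Fin k) (Fin k) ℂ)
        = V * diagonal (fun i => (((1:ℝ) - χ i : ℝ) : ℂ)) * star V
          + V * diagonal (fun i => ((χ i : ℝ) : ℂ)) * star V := by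
      rw [← Matrix.add_mul, ← Matrix.mul_add, diagonal_add]
      rw [show (fun i => ((((1:ℝ) - χ i : ℝ) : ℂ)) + ((χ i : ℝ) : ℂ)) = fun _ => (1:ℂ) from
        funext fun i => by push_cast; ring]
      rw [diagonal_one, Matrix.mul_one, hV]
    rw [hone, add_sub_cancel_right]
    exact conj_psd fun i => by by_cases h : 0 ≤ lam i <;> simp [hχ, h]
  · rw [hAeq, conj_mul_conj hV', trace_conj hV', Complex.re_sum]
    refine Finset.sum_congr rfl fun i _ => ?_
    by_cases h : 0 ≤ lam i
    · simp [hχ, h, max_eq_left h]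
    · simp [hχ, h, max_eq_right (le_of_not_ge h)]

lemma sum_max_eq (hA : A.IsHermitian) (hV' : star V * V = 1)
    (hAeq : A = V * diagonal (fun i => ((lam i : ℝ) : ℂ)) * star V) : ∑ i, max (lam i) 0 = (traceNorm A + A.trace.re)/2 := by
  have htr : A.trace.re = ∑ i, lam i := by
    rw [trace_eq_sum_eig hV' hAeq, Complex.re_sum]; simp
  rw [traceNorm_eq_sum_abs hA hV' hAeq, htr, ← Finset.sum_add_distrib, Finset.sum_div]
  refine Finset.sum_congr rfl fun i _ => ?_
  rcases le_total 0 (lam i) with h | h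
  · rw [max_eq_left h, abs_of_nonneg h]; ring
  · rw [max_eq_right h, abs_of_nonpos h]; ring

end generic

/-- spectral package -/
lemma spectral_package {A : Matrix (Fin k) (Fin k) ℂ} (hA : A.IsHermitian) :
    ∃ (V : Matrix (Fin k) (Fin k) ℂ) (lam : Fin k → ℝ),
      V * star V = 1 ∧ star V * V = 1 ∧
      A = V * diagonal (fun i => ((lam i : ℝ) : ℂ)) * star V := by
  refine ⟨(hA.eigenvectorUnitary : Matrix (Fin k) (Fin k) ℂ), hA.eigenvalues,
    Matrix.mem_unitaryGroup_iff.mp hA.eigenvectorUnitary.2,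
    Matrix.mem_unitaryGroup_iff'.mp hA.eigenvectorUnitary.2, ?_⟩
  conv_lhs => rw [hA.spectral_theorem]
  rfl

theorem isGreatest_test {A : Matrix (Fin k) (Fin k) ℂ} (hA : A.IsHermitian) :
    IsGreatest {r : ℝ | ∃ E : Matrix (Fin k) (Fin k) ℂ, E.PosSemidef ∧
        ((1 : Matrix (Fin k) (Fin k) ℂ) - E).PosSemidef ∧ r = ((E * A).trace).re}
      ((traceNorm A + A.trace.re)/2) := by
  obtain ⟨V, lam, hV, hV', hAeq⟩ := spectral_package hA
  constructor
  · obtain ⟨E, h1, h2, h3⟩ := exists_max_test hV hV' hAeq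
    exact ⟨E, h1, h2, by rw [h3, sum_max_eq hA hV' hAeq]⟩
  · rintro r ⟨E, h1, h2, rfl⟩
    rw [← sum_max_eq hA hV' hAeq]
    exact test_trace_le hV' hAeq h1 h2

lemma traceNorm_smul (A : Matrix (Fin k) (Fin k) ℂ) (c : ℝ) :
    traceNorm ((c:ℂ) • A) = |c| * traceNorm A := by
  have hS := Matrix.posSemidef_conjTranspose_mul_self A
  have h1 : (((|c| : ℝ) : ℂ) • hS.sqrt).PosSemidef := psd_smul hS.posSemidef_sqrt (abs_nonneg c)
  have hsq : (((|c| : ℝ) : ℂ) • hS.sqrt) ^ 2 = ((c:ℂ) • A)ᴴ * ((c:ℂ) • A) := by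
    rw [smul_pow, hS.sq_sqrt, conjTranspose_smul, Matrix.smul_mul, Matrix.mul_smul, smul_smul]
    congr 1
    rw [Complex.star_def, Complex.conj_ofReal]
    norm_cast
    rw [sq_abs]
    ring
  have heq := h1.eq_sqrt_of_sq_eq (Matrix.posSemidef_conjTranspose_mul_self ((c:ℂ) • A)) hsq
  unfold traceNorm
  rw [← heq, trace_smul]
  simp [Complex.smul_re]

lemma traceNorm_neg (A : Matrix (Fin k) (Fin k) ℂ) : traceNorm (-A) = traceNorm A := by
  have h : -A = (((-1 : ℝ)):ℂ) • A := by push_cast; simp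
  rw [h, traceNorm_smul]
  simp

lemma traceNorm_psd {A : Matrix (Fin k) (Fin k) ℂ} (hA : A.PosSemidef) :
    traceNorm A = A.trace.re := by
  have heq := hA.eq_sqrt_of_sq_eq (Matrix.posSemidef_conjTranspose_mul_self A)
    (by rw [pow_two, hA.1.eq])
  unfold traceNorm
  rw [← heq]

section comb
variable (ρ₁ ρ₂ : Matrix (Fin k) (Fin k) ℂ)

lemma herm_comb (hρ₁ : ρ₁.PosSemidef) (hρ₂ : ρ₂.PosSemidef) (t₁ t₂ : ℝ) :
    ((t₁:ℂ) • ρ₁ + (t₂:ℂ) • ρ₂).IsHermitian := by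
  unfold Matrix.IsHermitian
  rw [conjTranspose_add, conjTranspose_smul, conjTranspose_smul, hρ₁.1.eq, hρ₂.1.eq]
  simp [Complex.star_def, Complex.conj_ofReal]

lemma trace_re_comb (E : Matrix (Fin k) (Fin k) ℂ) (t₁ t₂ : ℝ) :
    ((E * ((t₁:ℂ) • ρ₁ + (t₂:ℂ) • ρ₂)).trace).re
      = t₁ * ((E * ρ₁).trace).re + t₂ * ((E * ρ₂).trace).re := by
  rw [Matrix.mul_add, Matrix.mul_smul, Matrix.mul_smul, trace_add, trace_smul, trace_smul]
  simp [Complex.add_re, Complex.smul_re]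

lemma trace_comb (h1 : ρ₁.trace = 1) (h2 : ρ₂.trace = 1) (t₁ t₂ : ℝ) :
    ((t₁:ℂ) • ρ₁ + (t₂:ℂ) • ρ₂).trace.re = t₁ + t₂ := by
  rw [trace_add, trace_smul, trace_smul, h1, h2]
  simp [Complex.smul_re]

end comb

lemma convex_testRegion (ρ₁ ρ₂ : Matrix (Fin k) (Fin k) ℂ) :
    Convex ℝ (testRegion ρ₁ ρ₂) := by
  rintro p ⟨E, hE, hE1, rfl⟩ q ⟨F, hF, hF1, rfl⟩ a b ha hb hab
  refine ⟨(a:ℂ) • E + (b:ℂ) • F, (psd_smul hE ha).add (psd_smul hF hb), ?_, ?_⟩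
  · have h1 : (a:ℂ) • (1 : Matrix (Fin k) (Fin k) ℂ) + (b:ℂ) • (1 : Matrix (Fin k) (Fin k) ℂ)
        = 1 := by
      rw [← add_smul]
      have : (a:ℂ) + (b:ℂ) = 1 := by exact_mod_cast congrArg (fun r : ℝ => (r:ℂ)) hab
      rw [this, one_smul]
    have key : (1 : Matrix (Fin k) (Fin k) ℂ) - ((a:ℂ) • E + (b:ℂ) • F)
        = (a:ℂ) • (1 - E) + (b:ℂ) • (1 - F) := by
      rw [smul_sub, smul_sub, sub_add_sub_comm, h1]
    rw [key]
    exact (psd_smul hE1 ha).add (psd_smul hF1 hb)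
  · have : ∀ ρ : Matrix (Fin k) (Fin k) ℂ,
        ((((a:ℂ) • E + (b:ℂ) • F) * ρ).trace).re
          = a * ((E * ρ).trace).re + b * ((F * ρ).trace).re := by
      intro ρ
      rw [Matrix.add_mul, Matrix.smul_mul, Matrix.smul_mul, trace_add, trace_smul, trace_smul]
      simp [Complex.add_re, Complex.smul_re]
    rw [Prod.smul_mk, Prod.smul_mk, Prod.mk_add_mk]
    simp only [smul_eq_mul, this]

lemma entry_re_sum {S : Matrix (Fin k) (Fin k) ℂ} (hS : S.IsHermitian) (i j : Fin k) :
    (S * S) i j = ∑ l, (starRingEnd ℂ) (S l i) * S l j := by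
  rw [Matrix.mul_apply]
  refine Finset.sum_congr rfl fun l _ => ?_
  congr 1
  rw [← hS.eq, conjTranspose_apply, Complex.star_def, hS.eq]

lemma test_entry_bound {E : Matrix (Fin k) (Fin k) ℂ} (hE : E.PosSemidef)
    (hE1 : ((1 : Matrix (Fin k) (Fin k) ℂ) - E).PosSemidef) (i j : Fin k) :
    ‖E i j‖ ≤ 1 := by
  set S := hE.sqrt with hSdef
  have hSS : S * S = E := hE.sqrt_mul_self
  have hSherm : S.IsHermitian := hE.posSemidef_sqrt.1
  have hEntry : ∀ i j, E i j = ∑ l, (starRingEnd ℂ) (S l i) * S l j := by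
    intro i j; rw [← hSS, entry_re_sum hSherm]
  have hdiag : ∀ i, ∑ l, ‖S l i‖^2 = (E i i).re := by
    intro i
    rw [hEntry i i, Complex.re_sum]
    refine Finset.sum_congr rfl fun l _ => ?_
    rw [mul_comm, Complex.mul_conj]
    rw [Complex.ofReal_re, Complex.normSq_eq_norm_sq]
  have hEii : ∀ i, (E i i).re ≤ 1 := by
    intro i
    have := (Complex.le_def.mp (psd_diag hE1 i)).1
    simp only [Matrix.sub_apply, Matrix.one_apply_eq, Complex.sub_re, Complex.one_re,
      Complex.zero_re] at this
    linarith
  set x : EuclideanSpace ℂ (Fin k) := WithLp.toLp 2 (fun l => S l i) with hx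
  set y : EuclideanSpace ℂ (Fin k) := WithLp.toLp 2 (fun l => S l j) with hy
  have hinner : (inner ℂ x y : ℂ) = E i j := by
    rw [hEntry i j]
    simp [PiLp.inner_apply, RCLike.inner_apply, hx, hy, mul_comm]
  have hxn : ‖x‖ ≤ 1 := by
    rw [EuclideanSpace.norm_eq]
    refine Real.sqrt_le_one.mpr ?_
    calc (∑ l, ‖x l‖^2) = (E i i).re := by rw [← hdiag i]
    _ ≤ 1 := hEii i
  have hyn : ‖y‖ ≤ 1 := by
    rw [EuclideanSpace.norm_eq]
    refine Real.sqrt_le_one.mpr ?_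
    calc (∑ l, ‖y l‖^2) = (E j j).re := by rw [← hdiag j]
    _ ≤ 1 := hEii j
  calc ‖E i j‖ = ‖(inner ℂ x y : ℂ)‖ := by rw [hinner]
  _ ≤ ‖x‖ * ‖y‖ := norm_inner_le_norm x y
  _ ≤ 1 * 1 := mul_le_mul hxn hyn (norm_nonneg _) zero_le_one
  _ = 1 := one_mul 1


lemma isClosed_psd : IsClosed {E : Matrix (Fin k) (Fin k) ℂ | E.PosSemidef} := by
  have hset : {E : Matrix (Fin k) (Fin k) ℂ | E.PosSemidef}
      = {E : Matrix (Fin k) (Fin k) ℂ | Eᴴ = E}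
        ∩ ⋂ x : Fin k → ℂ, {E : Matrix (Fin k) (Fin k) ℂ | 0 ≤ star x ⬝ᵥ E *ᵥ x} := by
    ext E
    simp only [Set.mem_setOf_eq, Set.mem_inter_iff, Set.mem_iInter]
    exact ⟨fun h => ⟨h.1, h.dotProduct_mulVec_nonneg⟩, fun h => .of_dotProduct_mulVec_nonneg h.1 h.2⟩
  rw [hset]
  have hnn : IsClosed {z : ℂ | 0 ≤ z} := by
    have : {z : ℂ | 0 ≤ z} = Complex.re ⁻¹' (Set.Ici 0) ∩ Complex.im ⁻¹' {0} := by
      ext z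
      simp [Complex.le_def, eq_comm]
    rw [this]
    exact (isClosed_Ici.preimage Complex.continuous_re).inter
      (isClosed_singleton.preimage Complex.continuous_im)
  refine IsClosed.inter (isClosed_eq (continuous_id.matrix_conjTranspose) continuous_id) ?_
  refine isClosed_iInter fun x => ?_
  have hcont : Continuous fun E : Matrix (Fin k) (Fin k) ℂ => star x ⬝ᵥ E *ᵥ x :=
    (continuous_const.dotProduct (continuous_id.matrix_mulVec continuous_const))
  exact hnn.preimage hcont

lemma isCompact_tests : IsCompact {E : Matrix (Fin k) (Fin k) ℂ | E.PosSemidef ∧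
    ((1 : Matrix (Fin k) (Fin k) ℂ) - E).PosSemidef} := by
  have hsub : {E : Matrix (Fin k) (Fin k) ℂ | E.PosSemidef ∧
      ((1 : Matrix (Fin k) (Fin k) ℂ) - E).PosSemidef}
      ⊆ Set.univ.pi (fun _ : Fin k => Set.univ.pi fun _ : Fin k => Metric.closedBall (0:ℂ) 1) := by
    rintro E ⟨hE, hE1⟩
    intro i _
    intro j _
    simpa [Metric.mem_closedBall, dist_zero_right] using test_entry_bound hE hE1 i j
  have hcomp : IsCompact (Set.univ.pi
      (fun _ : Fin k => Set.univ.pi fun _ : Fin k => Metric.closedBall (0:ℂ) 1) :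
        Set (Matrix (Fin k) (Fin k) ℂ)) :=
    isCompact_univ_pi fun _ => isCompact_univ_pi fun _ => isCompact_closedBall _ _
  refine IsCompact.of_isClosed_subset hcomp ?_ hsub
  have h2 : IsClosed {E : Matrix (Fin k) (Fin k) ℂ |
      ((1 : Matrix (Fin k) (Fin k) ℂ) - E).PosSemidef} := by
    have : Continuous fun E : Matrix (Fin k) (Fin k) ℂ =>
        (1 : Matrix (Fin k) (Fin k) ℂ) - E := continuous_const.sub continuous_id
    exact isClosed_psd.preimage this
  exact isClosed_psd.inter h2

lemma isClosed_testRegion (ρ₁ ρ₂ : Matrix (Fin k) (Fin k) ℂ) :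
    IsClosed (testRegion ρ₁ ρ₂) := by
  have himg : testRegion ρ₁ ρ₂ = (fun E : Matrix (Fin k) (Fin k) ℂ =>
      (((E * ρ₂).trace).re, ((E * ρ₁).trace).re)) '' {E : Matrix (Fin k) (Fin k) ℂ |
        E.PosSemidef ∧ ((1 : Matrix (Fin k) (Fin k) ℂ) - E).PosSemidef} := by
    ext p
    constructor
    · rintro ⟨E, h1, h2, rfl⟩
      exact ⟨E, ⟨h1, h2⟩, rfl⟩
    · rintro ⟨E, ⟨h1, h2⟩, rfl⟩
      exact ⟨E, h1, h2, rfl⟩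
  rw [himg]
  have hcont : Continuous fun E : Matrix (Fin k) (Fin k) ℂ =>
      (((E * ρ₂).trace).re, ((E * ρ₁).trace).re) :=
    (Complex.continuous_re.comp ((continuous_id.matrix_mul continuous_const).matrix_trace)).prodMk
      (Complex.continuous_re.comp ((continuous_id.matrix_mul continuous_const).matrix_trace))
  exact (isCompact_tests.image hcont).isClosed

lemma neg_comb (σ₁ σ₂ : Matrix (Fin k) (Fin k) ℂ) (t₁ t₂ : ℝ) :
    -((t₁:ℂ) • σ₁ + (t₂:ℂ) • σ₂) = (((-t₁ : ℝ)):ℂ) • σ₁ + (((-t₂ : ℝ)):ℂ) • σ₂ := by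
  push_cast
  module

lemma mixed_comb (σ₁ σ₂ : Matrix (Fin k) (Fin k) ℂ) (t₁ t₂ : ℝ) (ht₁ : t₁ ≠ 0) :
    (t₁:ℂ) • σ₁ + (t₂:ℂ) • σ₂ = (t₁:ℂ) • (σ₁ - (((-t₂/t₁ : ℝ)):ℂ) • σ₂) := by
  have hc : (t₁:ℂ) * (((-t₂/t₁ : ℝ)):ℂ) = ((-t₂ : ℝ) : ℂ) := by
    rw [← Complex.ofReal_mul]
    congr 1
    field_simp
  rw [smul_sub, smul_smul, hc]
  push_cast
  module

lemma psd_comb_norm (σ₁ σ₂ : Matrix (Fin k) (Fin k) ℂ) (hσ₁ : σ₁.PosSemidef)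
    (h1 : σ₁.trace = 1) (hσ₂ : σ₂.PosSemidef) (h2 : σ₂.trace = 1) (t₁ t₂ : ℝ)
    (ht₁ : 0 ≤ t₁) (ht₂ : 0 ≤ t₂) :
    traceNorm ((t₁:ℂ) • σ₁ + (t₂:ℂ) • σ₂) = t₁ + t₂ := by
  rw [traceNorm_psd ((psd_smul hσ₁ ht₁).add (psd_smul hσ₂ ht₂)), trace_comb σ₁ σ₂ h1 h2]

/-- Lemma 1 of the paper: for density matrices `(ρ₁,ρ₂)` on `ℂ^n` and `(ρ₁',ρ₂')` on
`ℂ^m`, the following are equivalent: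
(i) `T(ρ₁,ρ₂) ⊇ T(ρ₁',ρ₂')`;
(ii) `‖t₁ρ₁ + t₂ρ₂‖₁ ≥ ‖t₁ρ₁' + t₂ρ₂'‖₁` for all `t₁, t₂ ∈ ℝ`;
(iii) `‖ρ₁ - tρ₂‖₁ ≥ ‖ρ₁' - tρ₂'‖₁` for all `t ≥ 0`. -/
theorem testing_region_inclusion_tfae
    {n m : ℕ} (ρ₁ ρ₂ : Matrix (Fin n) (Fin n) ℂ) (ρ₁' ρ₂' : Matrix (Fin m) (Fin m) ℂ)
    (hρ₁ : ρ₁.PosSemidef) (hρ₁tr : ρ₁.trace = 1)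
    (hρ₂ : ρ₂.PosSemidef) (hρ₂tr : ρ₂.trace = 1)
    (hρ₁' : ρ₁'.PosSemidef) (hρ₁'tr : ρ₁'.trace = 1)
    (hρ₂' : ρ₂'.PosSemidef) (hρ₂'tr : ρ₂'.trace = 1) :
    List.TFAE
      [ testRegion ρ₁' ρ₂' ⊆ testRegion ρ₁ ρ₂,
        ∀ t₁ t₂ : ℝ,
          traceNorm ((t₁ : ℂ) • ρ₁' + (t₂ : ℂ) • ρ₂') ≤
            traceNorm ((t₁ : ℂ) • ρ₁ + (t₂ : ℂ) • ρ₂),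
        ∀ t : ℝ, 0 ≤ t →
          traceNorm (ρ₁' - (t : ℂ) • ρ₂') ≤ traceNorm (ρ₁ - (t : ℂ) • ρ₂) ] := by
  tfae_have 1 → 2 := by
    intro h1 t₁ t₂
    have hA' := herm_comb ρ₁' ρ₂' hρ₁' hρ₂' t₁ t₂
    have hA := herm_comb ρ₁ ρ₂ hρ₁ hρ₂ t₁ t₂
    obtain ⟨E', hE'1, hE'2, hE'val⟩ := (isGreatest_test hA').1
    have hp : (((E' * ρ₂').trace).re, ((E' * ρ₁').trace).re) ∈ testRegion ρ₁' ρ₂' :=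
      ⟨E', hE'1, hE'2, rfl⟩
    obtain ⟨E, hE1, hE2, hpe⟩ := h1 hp
    have hco1 : ((E' * ρ₂').trace).re = ((E * ρ₂).trace).re := congrArg Prod.fst hpe
    have hco2 : ((E' * ρ₁').trace).re = ((E * ρ₁).trace).re := congrArg Prod.snd hpe
    have hub := (isGreatest_test hA).2 ⟨E, hE1, hE2, rfl⟩
    have hlin' := trace_re_comb ρ₁' ρ₂' E' t₁ t₂
    have hlin := trace_re_comb ρ₁ ρ₂ E t₁ t₂
    rw [hco1, hco2] at hlin'
    have htr' := trace_comb ρ₁' ρ₂' hρ₁'tr hρ₂'tr t₁ t₂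
    have htr := trace_comb ρ₁ ρ₂ hρ₁tr hρ₂tr t₁ t₂
    rw [htr'] at hE'val
    rw [htr] at hub
    linarith
  tfae_have 2 → 1 := by
    intro h2 p hp
    by_contra hnot
    obtain ⟨E', hE'1, hE'2, rfl⟩ := hp
    obtain ⟨f, u, hfu, hup⟩ := geometric_hahn_banach_closed_point
      (convex_testRegion ρ₁ ρ₂) (isClosed_testRegion ρ₁ ρ₂) hnot
    set t₂ := f (1, 0) with ht₂
    set t₁ := f (0, 1) with ht₁
    have hf : ∀ z : ℝ × ℝ, f z = z.2 * t₁ + z.1 * t₂ := by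
      intro z
      have hz : z = z.1 • ((1:ℝ), (0:ℝ)) + z.2 • ((0:ℝ), (1:ℝ)) := by
        apply Prod.ext <;> simp
      conv_lhs => rw [hz]
      rw [map_add, _root_.map_smul, _root_.map_smul, smul_eq_mul, smul_eq_mul, ← ht₁, ← ht₂]
      ring
    have hA := herm_comb ρ₁ ρ₂ hρ₁ hρ₂ t₁ t₂
    have hA' := herm_comb ρ₁' ρ₂' hρ₁' hρ₂' t₁ t₂
    obtain ⟨E₀, h01, h02, h0val⟩ := (isGreatest_test hA).1
    have hq : (((E₀ * ρ₂).trace).re, ((E₀ * ρ₁).trace).re) ∈ testRegion ρ₁ ρ₂ :=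
      ⟨E₀, h01, h02, rfl⟩
    have h5 := hfu _ hq
    have hub := (isGreatest_test hA').2 ⟨E', hE'1, hE'2, rfl⟩
    have hlin := trace_re_comb ρ₁ ρ₂ E₀ t₁ t₂
    have hlin' := trace_re_comb ρ₁' ρ₂' E' t₁ t₂
    have htr := trace_comb ρ₁ ρ₂ hρ₁tr hρ₂tr t₁ t₂
    have htr' := trace_comb ρ₁' ρ₂' hρ₁'tr hρ₂'tr t₁ t₂
    rw [htr] at h0val
    rw [htr'] at hub
    have hfq := hf (((E₀ * ρ₂).trace).re, ((E₀ * ρ₁).trace).re)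
    have hfp := hf (((E' * ρ₂').trace).re, ((E' * ρ₁').trace).re)
    simp only at hfq hfp
    have h6 := h2 t₁ t₂
    linarith
  tfae_have 2 → 3 := by
    intro h2 t _
    have e1 : (((1:ℝ)):ℂ) • ρ₁' + (((-t : ℝ)):ℂ) • ρ₂' = ρ₁' - (t:ℂ) • ρ₂' := by
      push_cast; module
    have e2 : (((1:ℝ)):ℂ) • ρ₁ + (((-t : ℝ)):ℂ) • ρ₂ = ρ₁ - (t:ℂ) • ρ₂ := by
      push_cast; module
    have := h2 1 (-t)
    rw [show ((1:ℝ):ℂ) = ((1:ℝ):ℂ) from rfl] at this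
    push_cast at this e1 e2
    rw [e1, e2] at this
    exact this
  tfae_have 3 → 2 := by
    intro h3 t₁ t₂
    rcases le_or_gt 0 t₁ with h1 | h1 <;> rcases le_or_gt 0 t₂ with h2 | h2
    · rw [psd_comb_norm ρ₁' ρ₂' hρ₁' hρ₁'tr hρ₂' hρ₂'tr t₁ t₂ h1 h2,
        psd_comb_norm ρ₁ ρ₂ hρ₁ hρ₁tr hρ₂ hρ₂tr t₁ t₂ h1 h2]
    · -- 0 ≤ t₁, t₂ < 0
      rcases eq_or_lt_of_le h1 with h1e | h1p
      · -- t₁ = 0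
        rw [← traceNorm_neg ((t₁:ℂ) • ρ₁' + (t₂:ℂ) • ρ₂'), neg_comb,
          ← traceNorm_neg ((t₁:ℂ) • ρ₁ + (t₂:ℂ) • ρ₂), neg_comb,
          psd_comb_norm ρ₁' ρ₂' hρ₁' hρ₁'tr hρ₂' hρ₂'tr _ _ (by linarith) (by linarith),
          psd_comb_norm ρ₁ ρ₂ hρ₁ hρ₁tr hρ₂ hρ₂tr _ _ (by linarith) (by linarith)]
      · -- t₁ > 0
        have ht : 0 ≤ -t₂/t₁ := div_nonneg (by linarith) (by linarith)
        rw [mixed_comb ρ₁' ρ₂' t₁ t₂ (ne_of_gt h1p), mixed_comb ρ₁ ρ₂ t₁ t₂ (ne_of_gt h1p),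
          traceNorm_smul, traceNorm_smul]
        exact mul_le_mul_of_nonneg_left (h3 _ ht) (abs_nonneg t₁)
    · -- t₁ < 0, 0 ≤ t₂
      rw [← traceNorm_neg ((t₁:ℂ) • ρ₁' + (t₂:ℂ) • ρ₂'), neg_comb,
        ← traceNorm_neg ((t₁:ℂ) • ρ₁ + (t₂:ℂ) • ρ₂), neg_comb]
      rcases eq_or_lt_of_le h2 with h2e | h2p
      · rw [psd_comb_norm ρ₁' ρ₂' hρ₁' hρ₁'tr hρ₂' hρ₂'tr _ _ (by linarith) (by linarith),
          psd_comb_norm ρ₁ ρ₂ hρ₁ hρ₁tr hρ₂ hρ₂tr _ _ (by linarith) (by linarith)]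
      · have ht : 0 ≤ -(-t₂)/(-t₁) := div_nonneg (by linarith) (by linarith)
        rw [mixed_comb ρ₁' ρ₂' (-t₁) (-t₂) (by linarith), mixed_comb ρ₁ ρ₂ (-t₁) (-t₂) (by linarith),
          traceNorm_smul, traceNorm_smul]
        exact mul_le_mul_of_nonneg_left (h3 _ ht) (abs_nonneg _)
    · -- both negative
      rw [← traceNorm_neg ((t₁:ℂ) • ρ₁' + (t₂:ℂ) • ρ₂'), neg_comb,
        ← traceNorm_neg ((t₁:ℂ) • ρ₁ + (t₂:ℂ) • ρ₂), neg_comb,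
        psd_comb_norm ρ₁' ρ₂' hρ₁' hρ₁'tr hρ₂' hρ₂'tr _ _ (by linarith) (by linarith),
        psd_comb_norm ρ₁ ρ₂ hρ₁ hρ₁tr hρ₂ hρ₂tr _ _ (by linarith) (by linarith)]
  tfae_finish
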